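/- For a symmetric positive semidefinite A ∈ ℝ^{n×n}, the iterative peeling decomposition yields vectors x_1,...,x_n ∈ ℝ^n with ∑_{k=1}^n x_k x_k^T = A and ∑_{k=1}^n ‖x_k‖_1² ≤ n · tr(A). In particular γ_+(A) ≤ n · tr(A). -/

import Mathlib

open Finset Matrix in
theorem stmt18 (n : ℕ) (A : Matrix (Fin n) (Fin n) ℝ) (hA : A.PosSemidef) :
    (∃ x : Fin n → Fin n → ℝ,
      (∑ k, Matrix.vecMulVec (x k) (x k)) = A ∧
      (∑ k, (∑ j, |x k j|) ^ 2) ≤ (n : ℝ) * A.trace) ∧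
    sInf {s : ℝ | ∃ (p : ℕ) (x : Fin p → Fin n → ℝ),
        (∑ k, Matrix.vecMulVec (x k) (x k)) = A ∧
        s = ∑ k, (∑ j, |x k j|) ^ 2}
      ≤ (n : ℝ) * A.trace := by
  obtain ⟨S, hsym, hmul⟩ : ∃ S : Matrix (Fin n) (Fin n) ℝ, S.IsHermitian ∧ S * S = A := by
    open scoped MatrixOrder in
    exact ⟨CFC.sqrt A, (CFC.sqrt_nonneg A).posSemidef.isHermitian,
      CFC.sqrt_mul_sqrt_self A hA.nonneg⟩
  set x : Fin n → Fin n → ℝ := fun k j => S j k with hxdef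
  have hx : (∑ k, Matrix.vecMulVec (x k) (x k)) = A := by
    ext i j
    rw [← hmul]
    simp only [Matrix.sum_apply, Matrix.vecMulVec_apply, Matrix.mul_apply, hxdef]
    refine Finset.sum_congr rfl fun k _ => ?_
    have : S j k = S k j := by
      have := hsym.apply j k
      simpa using this.symm
    rw [this, mul_comm]
  have htr : (∑ k, ∑ j, (x k j) ^ 2) = A.trace := by
    rw [Finset.sum_comm]
    rw [Matrix.trace, ← hmul]
    refine Finset.sum_congr rfl fun j _ => ?_
    simp only [Matrix.diag_apply, Matrix.mul_apply, hxdef]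
    refine Finset.sum_congr rfl fun k _ => ?_
    have : S j k = S k j := by
      have := hsym.apply j k
      simpa using this.symm
    rw [sq, ← this]
  have hbound : (∑ k, (∑ j, |x k j|) ^ 2) ≤ (n : ℝ) * A.trace := by
    calc (∑ k, (∑ j, |x k j|) ^ 2)
        ≤ ∑ k : Fin n, (n : ℝ) * ∑ j, (x k j) ^ 2 := by
          refine Finset.sum_le_sum fun k _ => ?_
          have h := sq_sum_le_card_mul_sum_sq (s := Finset.univ)
            (f := fun j => |x k j|)
          simpa [sq_abs] using h
      _ = (n : ℝ) * A.trace := by rw [← Finset.mul_sum, htr]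
  constructor
  · exact ⟨x, hx, hbound⟩
  · refine le_trans (csInf_le ?_ ?_) hbound
    · refine ⟨0, fun s hs => ?_⟩
      obtain ⟨p, y, -, rfl⟩ := hs
      positivity
    · exact ⟨n, x, hx, rfl⟩
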